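/- Strengthened duplication: if A is a nonempty x-definable set and y₀ is any element, then there exists y₁ ∈ A with y₀ ⫫[x] y₁. -/
import Mathlib


/-- Strengthened duplication: if `A` is a nonempty `x`-definable set
and `y₀` is any element, then there exists `y₁ ∈ A` with `y₀ ⫫[x] y₁`. -/
theorem strengthened_duplication {Ω : Type*}
    (D : Ω → Set Ω) (𝔇 : Ω → Set (Set Ω)) (pair : Ω → Ω → Ω)
    (indep : Ω → Ω → Ω → Prop)
    -- definable closure is monotone and contains the parameters of the tuple
    (hmono : ∀ x y, D x ⊆ D (pair x y))
    (hbase : ∀ x y, x ∈ D (pair x y))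
    (hpairL : ∀ x y z, y ∈ D (pair x (pair y z)))
    (hpairR : ∀ x y z, z ∈ D (pair x (pair y z)))
    -- symmetry
    (hsymm : ∀ x y₀ y₁, indep x y₀ y₁ → indep x y₁ y₀)
    -- heredity
    (hhered : ∀ x y₀ y₁ y₀', y₀' ∈ D (pair x y₀) → indep x y₀ y₁ → indep x y₀' y₁)
    -- transitivity
    (htrans : ∀ x y₀ y₁ z, indep x y₀ y₁ → indep (pair x y₀) z y₁ →
      indep x (pair y₀ z) y₁)
    -- duplication
    (hdup : ∀ x, ∀ A ∈ 𝔇 x, A.Nonempty → ∃ y₀ ∈ A, ∃ y₁ ∈ A, indep x y₀ y₁)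
    -- product property (pairs coded via `pair`)
    (hprod : ∀ x y₀ y₁, ∀ A ∈ 𝔇 x, indep x y₀ y₁ → pair y₀ y₁ ∈ A →
      ∃ B₀ ∈ 𝔇 x, ∃ B₁ ∈ 𝔇 x, y₀ ∈ B₀ ∧ y₁ ∈ B₁ ∧
        ∀ y₀' ∈ B₀, ∀ y₁' ∈ B₁, indep x y₀' y₁' → pair y₀' y₁' ∈ A)
    -- `𝔇` is closed under (coded) products
    (hprodSet : ∀ x, ∀ B ∈ 𝔇 x, ∀ A ∈ 𝔇 x,
      {p | ∃ b ∈ B, ∃ a ∈ A, p = pair b a} ∈ 𝔇 x)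
    -- the class of counterexamples to a definable property is again definable
    (hcex : ∀ x, ∀ A ∈ 𝔇 x, {y | ∀ y₁ ∈ A, ¬ indep x y y₁} ∈ 𝔇 x) :
    ∀ (x y₀ : Ω), ∀ A ∈ 𝔇 x, A.Nonempty → ∃ y₁ ∈ A, indep x y₀ y₁ := by
  intro x y₀ A hA hAne
  by_contra h
  push_neg at h
  have hy₀C : y₀ ∈ {y | ∀ y₁ ∈ A, ¬ indep x y y₁} := h
  have hC := hcex x A hA
  have hP := hprodSet x _ hC A hA
  obtain ⟨a, ha⟩ := hAne
  have hPne : ({p | ∃ b ∈ {y | ∀ y₁ ∈ A, ¬ indep x y y₁}, ∃ a ∈ A, p = pair b a} : Set Ω).Nonempty :=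
    ⟨pair y₀ a, y₀, hy₀C, a, ha, rfl⟩
  obtain ⟨p₀, hp₀, p₁, hp₁, hind⟩ := hdup x _ hP hPne
  obtain ⟨c₀, hc₀, a₀, ha₀, rfl⟩ := hp₀
  obtain ⟨c₁, hc₁, a₁, ha₁, rfl⟩ := hp₁
  have h1 : indep x c₀ (pair c₁ a₁) := hhered x _ _ c₀ (hpairL x c₀ a₀) hind
  have h2 : indep x a₁ c₀ := hhered x _ _ a₁ (hpairR x c₁ a₁) (hsymm _ _ _ h1)
  exact hc₀ a₁ ha₁ (hsymm _ _ _ h2)
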